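/- Fix a natural code ε : ℝⁿ → ℕⁿ. If T ⊆ ℝⁿ determines a cube tiling of ℝⁿ, then ε maps T onto ℕⁿ, i.e., ε(T) = ℕⁿ. -/

import Mathlib

/-- The half-open unit cube `[0,1)ⁿ` translated by `t`. -/
def Cube {n : ℕ} (t : Fin n → ℝ) : Set (Fin n → ℝ) :=
  {x | ∀ j, t j ≤ x j ∧ x j < t j + 1}

/-- `T` determines a cube tiling of `ℝⁿ`: the cubes `[0,1)ⁿ + t`, `t ∈ T`,
are pairwise disjoint and their union is all of `ℝⁿ`. -/
def IsCubeTiling {n : ℕ} (T : Set (Fin n → ℝ)) : Prop :=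
  (∀ s ∈ T, ∀ t ∈ T, s ≠ t → Disjoint (Cube s) (Cube t)) ∧
  (⋃ t ∈ T, Cube t) = Set.univ

/-- `T ⊆ ℝ` determines a tiling of `ℝ` by unit intervals `[0,1) + t`. -/
def IsCubeTiling1 (T : Set ℝ) : Prop :=
  (∀ s ∈ T, ∀ t ∈ T, s ≠ t → Disjoint (Set.Ico s (s + 1)) (Set.Ico t (t + 1))) ∧
  (⋃ t ∈ T, Set.Ico t (t + 1)) = Set.univ

/-- The tiling determined by `T` contains a column: there are `s ∈ ℝⁿ` and a
standard basis vector `eᵢ` such that `s + k·eᵢ ∈ T` for every `k ∈ ℤ`. -/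
def ContainsColumn {n : ℕ} (T : Set (Fin n → ℝ)) : Prop :=
  ∃ s : Fin n → ℝ, ∃ i : Fin n, ∀ k : ℤ, (s + (k : ℝ) • (Pi.single i 1 : Fin n → ℝ)) ∈ T

/-- A natural code of `ℝⁿ`: each `ε j : ℝ → ℕ⁺` restricts to a bijection from
every coset `x + ℤ` onto the positive integers. -/
def IsNaturalCode {n : ℕ} (ε : Fin n → ℝ → ℕ+) : Prop :=
  ∀ j : Fin n, ∀ x : ℝ, Set.BijOn (ε j) {y : ℝ | ∃ m : ℤ, y = x + m} Set.univ

lemma tiling1_add_one {S : Set ℝ} (h : IsCubeTiling1 S) {s : ℝ} (hs : s ∈ S) :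
    s + 1 ∈ S := by
  have hmem : (s + 1 : ℝ) ∈ ⋃ t ∈ S, Set.Ico t (t + 1) := by rw [h.2]; trivial
  simp only [Set.mem_iUnion, Set.mem_Ico] at hmem
  obtain ⟨u, hu, h1, h2⟩ := hmem
  rcases eq_or_ne u (s + 1) with he | hne
  · rwa [he] at hu
  · exfalso
    have hsu : s ≠ u := by rintro rfl; linarith
    exact Set.disjoint_left.mp (h.1 s hs u hu hsu)
      ⟨by linarith, lt_of_le_of_ne h1 hne⟩ ⟨le_refl u, by linarith⟩

lemma tiling1_sub_one {S : Set ℝ} (h : IsCubeTiling1 S) {s : ℝ} (hs : s ∈ S) :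
    s - 1 ∈ S := by
  have hmem : (s - 1 : ℝ) ∈ ⋃ t ∈ S, Set.Ico t (t + 1) := by rw [h.2]; trivial
  simp only [Set.mem_iUnion, Set.mem_Ico] at hmem
  obtain ⟨u, hu, h1, h2⟩ := hmem
  rcases eq_or_ne u (s - 1) with he | hne
  · rwa [he] at hu
  · exfalso
    have hu2 : u + 1 + 1 ∈ S := tiling1_add_one h (tiling1_add_one h hu)
    have hlt : u < s - 1 := lt_of_le_of_ne h1 hne
    have hne2 : s ≠ u + 1 + 1 := by intro e; rw [e] at h2; linarith
    exact Set.disjoint_left.mp (h.1 s hs _ hu2 hne2)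
      ⟨by linarith, by linarith⟩ ⟨le_refl _, by linarith⟩

lemma tiling1_coset {S : Set ℝ} (h : IsCubeTiling1 S) {s : ℝ} (hs : s ∈ S) (m : ℤ) :
    s + m ∈ S := by
  induction m using Int.induction_on with
  | zero => simpa using hs
  | succ k hk =>
      have he : s + ((k : ℤ) + 1 : ℤ) = (s + (k : ℤ)) + 1 := by push_cast; ring
      rw [he]; exact tiling1_add_one h hk
  | pred k hk =>
      have he : s + (-(k : ℤ) - 1 : ℤ) = (s + (-(k : ℤ) : ℤ)) - 1 := by push_cast; ring
      rw [he]; exact tiling1_sub_one h hk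

lemma tiling1_mem_coset {S : Set ℝ} (h : IsCubeTiling1 S) {s u : ℝ} (hs : s ∈ S) (hu : u ∈ S) :
    ∃ m : ℤ, u = s + m := by
  refine ⟨⌊u - s⌋, ?_⟩
  have h1 : s + (⌊u - s⌋ : ℝ) ∈ S := tiling1_coset h hs _
  rcases eq_or_ne u (s + (⌊u - s⌋ : ℝ)) with he | hne
  · exact he
  · exfalso
    have hl := Int.floor_le (u - s)
    have hl2 := Int.lt_floor_add_one (u - s)
    exact Set.disjoint_left.mp (h.1 u hu _ h1 hne)
      ⟨le_refl u, by linarith⟩ ⟨by linarith, by linarith⟩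

lemma line_tiling {n : ℕ} {T : Set (Fin (n + 1) → ℝ)} (hT : IsCubeTiling T)
    (x' : Fin n → ℝ) :
    IsCubeTiling1 {r | ∃ t ∈ T, t 0 = r ∧
      ∀ j : Fin n, t j.succ ≤ x' j ∧ x' j < t j.succ + 1} := by
  constructor
  · rintro p ⟨t, ht, rfl, htx⟩ q ⟨u, hu, rfl, hux⟩ hpq
    rw [Set.disjoint_left]
    rintro r ⟨h1, h2⟩ ⟨h3, h4⟩
    have htu : t ≠ u := fun e => hpq (by rw [e])
    have hx : Fin.cons r x' ∈ Cube t := by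
      intro j
      refine Fin.cases ?_ ?_ j
      · simpa using ⟨h1, h2⟩
      · intro i; simpa using htx i
    have hx' : Fin.cons r x' ∈ Cube u := by
      intro j
      refine Fin.cases ?_ ?_ j
      · simpa using ⟨h3, h4⟩
      · intro i; simpa using hux i
    exact Set.disjoint_left.mp (hT.1 t ht u hu htu) hx hx'
  · rw [Set.eq_univ_iff_forall]
    intro r
    have hmem : (Fin.cons r x' : Fin (n + 1) → ℝ) ∈ ⋃ t ∈ T, Cube t := by
      rw [hT.2]; trivial
    simp only [Set.mem_iUnion] at hmem
    obtain ⟨t, ht, hx⟩ := hmem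
    refine Set.mem_iUnion₂.mpr ⟨t 0, ⟨t, ht, rfl, fun j => by simpa using hx j.succ⟩,
      ?_⟩
    simpa using hx 0

lemma key : ∀ n : ℕ, ∀ ε : Fin n → ℝ → ℕ+, IsNaturalCode ε →
    ∀ T : Set (Fin n → ℝ), IsCubeTiling T →
    ∀ a : Fin n → ℕ+, ∃ t ∈ T, ∀ j, ε j (t j) = a j := by
  intro n
  induction n with
  | zero =>
    intro ε hε T hT a
    have hmem : (fun i : Fin 0 => (0 : ℝ)) ∈ ⋃ t ∈ T, Cube t := by rw [hT.2]; trivial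
    simp only [Set.mem_iUnion] at hmem
    obtain ⟨t, ht, -⟩ := hmem
    exact ⟨t, ht, fun j => j.elim0⟩
  | succ n ih =>
    intro ε hε T hT a
    -- Existence of a tile over any point of the slice, with prescribed first code
    have hline : ∀ x' : Fin n → ℝ, ∃ t ∈ T, ε 0 (t 0) = a 0 ∧
        ∀ j : Fin n, t j.succ ≤ x' j ∧ x' j < t j.succ + 1 := by
      intro x'
      have h1 := line_tiling hT x'
      have hmem : (0 : ℝ) ∈ ⋃ t ∈ {r | ∃ t ∈ T, t 0 = r ∧
          ∀ j : Fin n, t j.succ ≤ x' j ∧ x' j < t j.succ + 1}, Set.Ico t (t + 1) := by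
        rw [h1.2]; trivial
      simp only [Set.mem_iUnion] at hmem
      obtain ⟨s₀, hs₀, -⟩ := hmem
      obtain ⟨y, hyC, hy⟩ := (hε 0 s₀).surjOn (Set.mem_univ (a 0))
      obtain ⟨m, rfl⟩ := hyC
      obtain ⟨t, ht, h0, htx⟩ := tiling1_coset h1 hs₀ m
      exact ⟨t, ht, by rw [h0]; exact hy, htx⟩
    -- Uniqueness of such a tile
    have huniq : ∀ x' : Fin n → ℝ, ∀ t ∈ T, ∀ u ∈ T,
        ε 0 (t 0) = a 0 → ε 0 (u 0) = a 0 →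
        (∀ j : Fin n, t j.succ ≤ x' j ∧ x' j < t j.succ + 1) →
        (∀ j : Fin n, u j.succ ≤ x' j ∧ x' j < u j.succ + 1) → t = u := by
      intro x' t ht u hu hct hcu htx hux
      have h1 := line_tiling hT x'
      have htS : t 0 ∈ {r | ∃ t ∈ T, t 0 = r ∧
          ∀ j : Fin n, t j.succ ≤ x' j ∧ x' j < t j.succ + 1} := ⟨t, ht, rfl, htx⟩
      have huS : u 0 ∈ {r | ∃ t ∈ T, t 0 = r ∧
          ∀ j : Fin n, t j.succ ≤ x' j ∧ x' j < t j.succ + 1} := ⟨u, hu, rfl, hux⟩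
      obtain ⟨m, hm⟩ := tiling1_mem_coset h1 htS huS
      have h00 : t 0 = u 0 :=
        (hε 0 (t 0)).injOn ⟨0, by simp⟩ ⟨m, hm⟩ (hct.trans hcu.symm)
      by_contra hne
      have hx : Fin.cons (t 0) x' ∈ Cube t := by
        intro j
        refine Fin.cases ?_ ?_ j
        · simp
        · intro i; simpa using htx i
      have hx' : Fin.cons (t 0) x' ∈ Cube u := by
        intro j
        refine Fin.cases ?_ ?_ j
        · simp [h00]
        · intro i; simpa using hux i
      exact Set.disjoint_left.mp (hT.1 t ht u hu hne) hx hx'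
    -- The slice tiling of ℝⁿ
    have hT' : IsCubeTiling {t' : Fin n → ℝ | ∃ t ∈ T, ε 0 (t 0) = a 0 ∧ Fin.tail t = t'} := by
      constructor
      · rintro s' ⟨s, hsT, hcs, rfl⟩ t' ⟨t, htT, hct, rfl⟩ hne
        rw [Set.disjoint_left]
        intro x' hx1 hx2
        exact hne (by rw [huniq x' s hsT t htT hcs hct (fun j => hx1 j) (fun j => hx2 j)])
      · rw [Set.eq_univ_iff_forall]
        intro x'
        obtain ⟨t, ht, hc, htx⟩ := hline x'
        exact Set.mem_iUnion₂.mpr ⟨Fin.tail t, ⟨t, ht, hc, rfl⟩, fun j => htx j⟩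
    have hε' : IsNaturalCode (fun j : Fin n => ε j.succ) := fun j x => hε j.succ x
    obtain ⟨t', ht', hct'⟩ := ih (fun j : Fin n => ε j.succ) hε' _ hT' (fun j => a j.succ)
    obtain ⟨t, ht, hc, rfl⟩ := ht'
    refine ⟨t, ht, fun j => ?_⟩
    refine Fin.cases ?_ ?_ j
    · exact hc
    · intro i; exact hct' i

/-- A natural code maps any set determining a cube tiling of `ℝⁿ` onto `ℕⁿ`. -/
theorem code_surjective_on_tiling {n : ℕ} (ε : Fin n → ℝ → ℕ+) (hε : IsNaturalCode ε)
    (T : Set (Fin n → ℝ)) (hT : IsCubeTiling T) :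
    (fun t : Fin n → ℝ => fun j => ε j (t j)) '' T = Set.univ := by
  apply Set.eq_univ_of_forall
  intro a
  obtain ⟨t, ht, hc⟩ := key n ε hε T hT a
  exact ⟨t, ht, funext hc⟩
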